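/- Let S be a set of at least three points in general position in the plane, and let a, b, z ∈ S be distinct points such that z lies on the boundary of the convex hull of S. Then there exists a plane Hamiltonian path on S that contains the segment ab as an edge and starts at z. -/

import Mathlib

open Set
open scoped Classical

noncomputable section

/-- Points in the plane. -/
abbrev Pt : Type := ℝ × ℝ

/-- Orientation determinant of the triple `(a, b, p)`:
positive iff `p` lies strictly to the left of the directed line from `a` to `b`. -/
def det3 (a b p : Pt) : ℝ :=
  (b.1 - a.1) * (p.2 - a.2) - (b.2 - a.2) * (p.1 - a.1)

/-- A finite point set is in general position if no three of its points are collinear. -/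
def GenPos (S : Finset Pt) : Prop :=
  ∀ p ∈ S, ∀ q ∈ S, ∀ r ∈ S,
    p ≠ q → p ≠ r → q ≠ r → ¬ Collinear ℝ ({p, q, r} : Set Pt)

/-- The list of (directed) edges of a polygonal path given by its list of vertices. -/
def edgeList (l : List Pt) : List (Pt × Pt) := l.zip l.tail

/-- The segment `ab` is an edge of the path `l`, i.e. `a` and `b` are consecutive on `l`. -/
def IsEdgeOf (a b : Pt) (l : List Pt) : Prop :=
  (a, b) ∈ edgeList l ∨ (b, a) ∈ edgeList l

/-- `l` is a plane (crossing-free) Hamiltonian path on the point set `S`: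
its vertices are exactly the points of `S`, each visited once, and any two distinct
edges intersect only in common endpoints. -/
def PlanePath (S : Finset Pt) (l : List Pt) : Prop :=
  l.Nodup ∧ l.toFinset = S ∧
  ∀ e ∈ edgeList l, ∀ f ∈ edgeList l, e ≠ f →
    segment ℝ e.1 e.2 ∩ segment ℝ f.1 f.2 ⊆
      (({e.1, e.2} : Set Pt) ∩ ({f.1, f.2} : Set Pt))

/-- Two paths are edge-disjoint: no segment is an edge of both. -/
def EdgeDisjoint (l₁ l₂ : List Pt) : Prop :=
  ∀ x y : Pt, IsEdgeOf x y l₁ → ¬ IsEdgeOf x y l₂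

/-- `p` is a vertex of the boundary of the convex hull of `S`. -/
def HullVertex (S : Finset Pt) (p : Pt) : Prop :=
  p ∈ Set.extremePoints ℝ (convexHull ℝ (S : Set Pt))

/-- `ab` is an edge of the boundary of the convex hull of `S`, i.e. `a` and `b` are
consecutive hull vertices: all other points of `S` lie strictly on one side of line `ab`. -/
def IsHullEdge (S : Finset Pt) (a b : Pt) : Prop :=
  a ∈ S ∧ b ∈ S ∧ a ≠ b ∧
  ((∀ p ∈ S, p ≠ a → p ≠ b → 0 < det3 a b p) ∨
   (∀ p ∈ S, p ≠ a → p ≠ b → det3 a b p < 0))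

/-- The segment `xy` is a bridge over the line through `a` and `b`:
it crosses the line `ℓ(ab)` but not the segment `ab`. -/
def IsBridge (a b x y : Pt) : Prop :=
  det3 a b x * det3 a b y < 0 ∧ segment ℝ x y ∩ segment ℝ a b = ∅

/-- The set of common edges of the two paths is exactly the segment `ab`. -/
def SharesExactly (a b : Pt) (l₁ l₂ : List Pt) : Prop :=
  IsEdgeOf a b l₁ ∧ IsEdgeOf a b l₂ ∧
  ∀ x y : Pt, IsEdgeOf x y l₁ → IsEdgeOf x y l₂ → ({x, y} : Set Pt) = ({a, b} : Set Pt)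

-- basic det3 lemmas
lemma det3_ab_a (a b : Pt) : det3 a b a = 0 := by simp only [det3]; ring
lemma det3_ab_b (a b : Pt) : det3 a b b = 0 := by simp only [det3]; ring
lemma det3_swap (a b p : Pt) : det3 b a p = - det3 a b p := by simp only [det3]; ring
lemma det3_swap23 (u x y : Pt) : det3 u x y = - det3 u y x := by simp only [det3]; ring

lemma det3_affine (a b x y : Pt) {s t : ℝ} (h : s + t = 1) :
    det3 a b (s • x + t • y) = s * det3 a b x + t * det3 a b y := by
  have hs : s = 1 - t := by linarith
  subst hs
  simp [det3, Prod.fst_add, Prod.snd_add, Prod.smul_fst, Prod.smul_snd, smul_eq_mul]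
  ring

lemma seg_pos {a b p q x : Pt} (hp : 0 < det3 a b p) (hq : 0 < det3 a b q)
    (hx : x ∈ segment ℝ p q) : 0 < det3 a b x := by
  obtain ⟨s, t, hs, ht, hst, rfl⟩ := hx
  rw [det3_affine _ _ _ _ hst]
  rcases eq_or_lt_of_le hs with h | h
  · have ht1 : t = 1 := by linarith
    rw [← h, ht1]; linarith
  · nlinarith [mul_pos h hp, mul_nonneg ht hq.le]

lemma seg_nonneg {a b p q x : Pt} (hp : 0 ≤ det3 a b p) (hq : 0 ≤ det3 a b q)
    (hx : x ∈ segment ℝ p q) : 0 ≤ det3 a b x := by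
  obtain ⟨s, t, hs, ht, hst, rfl⟩ := hx
  rw [det3_affine _ _ _ _ hst]
  nlinarith

lemma seg_zero {a b p q x : Pt} (hp : det3 a b p = 0) (hq : det3 a b q = 0)
    (hx : x ∈ segment ℝ p q) : det3 a b x = 0 := by
  obtain ⟨s, t, hs, ht, hst, rfl⟩ := hx
  rw [det3_affine _ _ _ _ hst, hp, hq]
  ring

lemma seg_eq_endpoint {a b p q x : Pt} (hp : 0 < det3 a b p) (hq : det3 a b q = 0)
    (hx : x ∈ segment ℝ p q) (hx0 : det3 a b x = 0) : x = q := by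
  obtain ⟨s, t, hs, ht, hst, rfl⟩ := hx
  rw [det3_affine _ _ _ _ hst, hq, mul_zero, add_zero] at hx0
  have hs0 : s = 0 := by
    rcases mul_eq_zero.1 hx0 with h | h
    · exact h
    · exact absurd h (ne_of_gt hp)
  have ht1 : t = 1 := by linarith
  subst hs0; subst ht1
  simp

-- cross lemmas
lemma cross_line {u w p q : Pt}
    (hp : 0 < det3 u w p ∨ p = w) (hq : 0 < det3 u w q ∨ q = w) (hpq : p ≠ q) :
    segment ℝ u w ∩ segment ℝ p q ⊆ ({u, w} : Set Pt) ∩ {p, q} := by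
  rintro x ⟨hx1, hx2⟩
  have hx0 : det3 u w x = 0 := seg_zero (det3_ab_a u w) (det3_ab_b u w) hx1
  rcases hp with hp | hpw
  · rcases hq with hq | hqw
    · exact absurd hx0 (ne_of_gt (seg_pos hp hq hx2))
    · have hx2' : x ∈ segment ℝ p w := by rwa [hqw] at hx2
      have hxw : x = w := seg_eq_endpoint hp (det3_ab_b u w) hx2' hx0
      exact ⟨by simp [hxw], by simp [hxw, hqw]⟩
  · rcases hq with hq | hqw
    · have hx2' : x ∈ segment ℝ q w := by rw [hpw] at hx2; rwa [segment_symm] at hx2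
      have hxw : x = w := seg_eq_endpoint hq (det3_ab_b u w) hx2' hx0
      exact ⟨by simp [hxw], by simp [hxw, hpw]⟩
    · exact absurd (hpw.trans hqw.symm) hpq

lemma cross_line' {u w p q : Pt}
    (hp : 0 < det3 u w p ∨ p = u) (hq : 0 < det3 u w q ∨ q = u) (hpq : p ≠ q) :
    segment ℝ u w ∩ segment ℝ p q ⊆ ({u, w} : Set Pt) ∩ {p, q} := by
  rintro x ⟨hx1, hx2⟩
  have hx0 : det3 u w x = 0 := seg_zero (det3_ab_a u w) (det3_ab_b u w) hx1
  rcases hp with hp | hpu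
  · rcases hq with hq | hqu
    · exact absurd hx0 (ne_of_gt (seg_pos hp hq hx2))
    · have hx2' : x ∈ segment ℝ p u := by rwa [hqu] at hx2
      have hxu : x = u := seg_eq_endpoint hp (det3_ab_a u w) hx2' hx0
      exact ⟨by simp [hxu], by simp [hxu, hqu]⟩
  · rcases hq with hq | hqu
    · have hx2' : x ∈ segment ℝ q u := by rw [hpu] at hx2; rwa [segment_symm] at hx2
      have hxu : x = u := seg_eq_endpoint hq (det3_ab_a u w) hx2' hx0
      exact ⟨by simp [hxu], by simp [hxu, hpu]⟩
    · exact absurd (hpu.trans hqu.symm) hpq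

lemma seg_le_zero {a b p q x : Pt} (hp : det3 a b p ≤ 0) (hq : det3 a b q ≤ 0)
    (hx : x ∈ segment ℝ p q) : det3 a b x ≤ 0 := by
  have h1 : 0 ≤ det3 b a p := by rw [det3_swap]; linarith
  have h2 : 0 ≤ det3 b a q := by rw [det3_swap]; linarith
  have := seg_nonneg h1 h2 hx
  rw [det3_swap] at this; linarith

lemma seg_eq_endpoint_neg {a b p q x : Pt} (hp : det3 a b p < 0) (hq : det3 a b q = 0)
    (hx : x ∈ segment ℝ p q) (hx0 : det3 a b x = 0) : x = q := by
  have h1 : 0 < det3 b a p := by rw [det3_swap]; linarith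
  have h2 : det3 b a q = 0 := by rw [det3_swap]; linarith
  have h3 : det3 b a x = 0 := by rw [det3_swap]; linarith
  exact seg_eq_endpoint h1 h2 hx h3

lemma cross_LR {a b p q r s : Pt} (hab : a ≠ b)
    (hp : 0 < det3 a b p ∨ p = a) (hq : 0 < det3 a b q ∨ q = a) (hpq : p ≠ q)
    (hr : det3 a b r < 0 ∨ r = b) (hs : det3 a b s < 0 ∨ s = b) (hrs : r ≠ s) :
    segment ℝ p q ∩ segment ℝ r s ⊆ ({p, q} : Set Pt) ∩ {r, s} := by
  rintro x ⟨hx1, hx2⟩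
  exfalso
  have hp' : 0 ≤ det3 a b p := by
    rcases hp with h | h
    · linarith
    · simp [h, det3_ab_a]
  have hq' : 0 ≤ det3 a b q := by
    rcases hq with h | h
    · linarith
    · simp [h, det3_ab_a]
  have hr' : det3 a b r ≤ 0 := by
    rcases hr with h | h
    · linarith
    · simp [h, det3_ab_b]
  have hs' : det3 a b s ≤ 0 := by
    rcases hs with h | h
    · linarith
    · simp [h, det3_ab_b]
  have hge := seg_nonneg hp' hq' hx1
  have hle := seg_le_zero hr' hs' hx2
  have hx0 : det3 a b x = 0 := le_antisymm hle hge
  have hxa : x = a := by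
    rcases hp with hp | hpa
    · rcases hq with hq | hqa
      · exact absurd hx0 (ne_of_gt (seg_pos hp hq hx1))
      · have hx1' : x ∈ segment ℝ p a := by rwa [hqa] at hx1
        exact seg_eq_endpoint hp (det3_ab_a a b) hx1' hx0
    · rcases hq with hq | hqa
      · have hx1' : x ∈ segment ℝ q a := by rw [hpa] at hx1; rwa [segment_symm] at hx1
        exact seg_eq_endpoint hq (det3_ab_a a b) hx1' hx0
      · exact absurd (hpa.trans hqa.symm) hpq
  have hxb : x = b := by
    rcases hr with hr | hrb
    · rcases hs with hs | hsb
      · refine absurd hx0 (ne_of_lt ?_)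
        have h1 : 0 < det3 b a r := by rw [det3_swap]; linarith
        have h2 : 0 < det3 b a s := by rw [det3_swap]; linarith
        have := seg_pos h1 h2 hx2
        rw [det3_swap] at this; linarith
      · have hx2' : x ∈ segment ℝ r b := by rwa [hsb] at hx2
        exact seg_eq_endpoint_neg hr (det3_ab_b a b) hx2' hx0
    · rcases hs with hs | hsb
      · have hx2' : x ∈ segment ℝ s b := by rw [hrb] at hx2; rwa [segment_symm] at hx2
        exact seg_eq_endpoint_neg hs (det3_ab_b a b) hx2' hx0
      · exact absurd (hrb.trans hsb.symm) hrs
  exact hab (hxa ▸ hxb ▸ rfl)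

lemma cross_Lab {a b p q : Pt}
    (hp : 0 < det3 a b p ∨ p = a) (hq : 0 < det3 a b q ∨ q = a) (hpq : p ≠ q) :
    segment ℝ p q ∩ segment ℝ a b ⊆ ({p, q} : Set Pt) ∩ {a, b} := by
  rintro x ⟨hx1, hx2⟩
  have hx0 : det3 a b x = 0 := seg_zero (det3_ab_a a b) (det3_ab_b a b) hx2
  rcases hp with hp | hpa
  · rcases hq with hq | hqa
    · exact absurd hx0 (ne_of_gt (seg_pos hp hq hx1))
    · have hx1' : x ∈ segment ℝ p a := by rwa [hqa] at hx1
      have hxa : x = a := seg_eq_endpoint hp (det3_ab_a a b) hx1' hx0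
      exact ⟨by simp [hxa, hqa], by simp [hxa]⟩
  · rcases hq with hq | hqa
    · have hx1' : x ∈ segment ℝ q a := by rw [hpa] at hx1; rwa [segment_symm] at hx1
      have hxa : x = a := seg_eq_endpoint hq (det3_ab_a a b) hx1' hx0
      exact ⟨by simp [hxa, hpa], by simp [hxa]⟩
    · exact absurd (hpa.trans hqa.symm) hpq

lemma cross_Rab {a b r s : Pt}
    (hr : det3 a b r < 0 ∨ r = b) (hs : det3 a b s < 0 ∨ s = b) (hrs : r ≠ s) :
    segment ℝ r s ∩ segment ℝ a b ⊆ ({r, s} : Set Pt) ∩ {a, b} := by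
  have hr' : 0 < det3 b a r ∨ r = b := by
    rcases hr with h | h
    · left; rw [det3_swap]; linarith
    · right; exact h
  have hs' : 0 < det3 b a s ∨ s = b := by
    rcases hs with h | h
    · left; rw [det3_swap]; linarith
    · right; exact h
  have key := cross_Lab hr' hs' hrs
  rw [segment_symm ℝ a b, Set.pair_comm a b]
  exact key

-- collinearity
lemma collinear_of_det3 {p q r : Pt} (h : det3 p q r = 0) :
    Collinear ℝ ({p, q, r} : Set Pt) := by
  by_cases hpq : p = q
  · have : ({p, q, r} : Set Pt) = {q, r} := by
      rw [hpq]; ext x; simp [Set.mem_insert_iff]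
    rw [this]
    exact collinear_pair ℝ q r
  rw [collinear_iff_of_mem (Set.mem_insert p {q, r})]
  refine ⟨q - p, ?_⟩
  intro x hx
  rcases hx with rfl | hx
  · exact ⟨0, by simp⟩
  rcases hx with rfl | hx
  · refine ⟨1, ?_⟩
    show x = (1 : ℝ) • (x - p) +ᵥ p
    simp
  rcases hx with rfl
  by_cases h1 : q.1 - p.1 ≠ 0
  · refine ⟨(x.1 - p.1) / (q.1 - p.1), ?_⟩
    show x = ((x.1 - p.1) / (q.1 - p.1)) • (q - p) +ᵥ p
    have hd : det3 p q x = 0 := h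
    simp only [det3] at hd
    apply Prod.ext
    · show x.1 = ((x.1 - p.1) / (q.1 - p.1)) * (q - p).1 + p.1
      have : (q - p).1 = q.1 - p.1 := rfl
      rw [this]
      field_simp
      ring
    · show x.2 = ((x.1 - p.1) / (q.1 - p.1)) * (q - p).2 + p.2
      have : (q - p).2 = q.2 - p.2 := rfl
      rw [this]
      field_simp
      nlinarith [hd]
  · push_neg at h1
    have h2 : q.2 - p.2 ≠ 0 := by
      intro h2
      apply hpq
      have e1 : q.1 = p.1 := by linarith
      have e2 : q.2 = p.2 := by linarith
      exact (Prod.ext e1 e2).symm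
    have hd : det3 p q x = 0 := h
    simp only [det3] at hd
    have hx1 : x.1 = p.1 := by
      have : (q.2 - p.2) * (x.1 - p.1) = 0 := by rw [h1] at hd; linarith
      rcases mul_eq_zero.1 this with h' | h'
      · exact absurd h' h2
      · linarith
    refine ⟨(x.2 - p.2) / (q.2 - p.2), ?_⟩
    show x = ((x.2 - p.2) / (q.2 - p.2)) • (q - p) +ᵥ p
    apply Prod.ext
    · show x.1 = ((x.2 - p.2) / (q.2 - p.2)) * (q - p).1 + p.1
      have : (q - p).1 = q.1 - p.1 := rfl
      rw [this, h1]
      simp [hx1]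
    · show x.2 = ((x.2 - p.2) / (q.2 - p.2)) * (q - p).2 + p.2
      have : (q - p).2 = q.2 - p.2 := rfl
      rw [this]
      field_simp
      ring

lemma GenPos.det3_ne_zero {S : Finset Pt} (hgp : GenPos S) {p q r : Pt}
    (hp : p ∈ S) (hq : q ∈ S) (hr : r ∈ S)
    (hpq : p ≠ q) (hpr : p ≠ r) (hqr : q ≠ r) : det3 p q r ≠ 0 :=
  fun h => hgp p hp q hq r hr hpq hpr hqr (collinear_of_det3 h)

lemma genPos_mono {S T : Finset Pt} (h : GenPos S) (hT : T ⊆ S) : GenPos T :=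
  fun p hp q hq r hr => h p (hT hp) q (hT hq) r (hT hr)

-- edgeList lemmas
lemma edgeList_cons_cons (x y : Pt) (t : List Pt) :
    edgeList (x :: y :: t) = (x, y) :: edgeList (y :: t) := rfl

lemma mem_of_mem_edgeList {l : List Pt} {e : Pt × Pt} (h : e ∈ edgeList l) :
    e.1 ∈ l ∧ e.2 ∈ l := by
  unfold edgeList at h
  obtain ⟨e1, e2⟩ := e
  have := List.of_mem_zip h
  exact ⟨this.1, List.mem_of_mem_tail this.2⟩

lemma edge_ne_of_nodup {l : List Pt} (hnd : l.Nodup) {e : Pt × Pt}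
    (he : e ∈ edgeList l) : e.1 ≠ e.2 := by
  induction l with
  | nil => simp [edgeList] at he
  | cons x t ih =>
    cases t with
    | nil => simp [edgeList] at he
    | cons y t' =>
      rw [edgeList_cons_cons] at he
      rcases List.mem_cons.1 he with rfl | he'
      · intro h
        have : x ∉ y :: t' := (List.nodup_cons.1 hnd).1
        exact this (List.mem_cons.2 (Or.inl h))
      · exact ih (List.nodup_cons.1 hnd).2 he'

lemma edgeList_append {l₁ l₂ : List Pt} {x y : Pt}
    (h₁ : l₁.getLast? = some x) (h₂ : l₂.head? = some y) :
    edgeList (l₁ ++ l₂) = edgeList l₁ ++ (x, y) :: edgeList l₂ := by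
  induction l₁ with
  | nil => simp at h₁
  | cons a t ih =>
    cases t with
    | nil =>
      have hax : a = x := by simpa using h₁
      cases l₂ with
      | nil => simp at h₂
      | cons y' t₂ =>
        have hy : y' = y := by simpa using h₂
        subst hax; subst hy
        simp [edgeList_cons_cons, edgeList]
    | cons b t' =>
      have h₁' : (b :: t').getLast? = some x := by
        rwa [List.getLast?_cons_cons] at h₁
      have : (a :: b :: t') ++ l₂ = a :: b :: (t' ++ l₂) := by simp
      rw [this, edgeList_cons_cons]
      have hbl : b :: (t' ++ l₂) = (b :: t') ++ l₂ := by simp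
      rw [hbl, ih h₁', edgeList_cons_cons]
      simp

-- separation direction
def SepDir (S : Finset Pt) (u : Pt) : Prop :=
  ∃ d : Pt, ∀ p ∈ S, p ≠ u → 0 < d.1 * (p.1 - u.1) + d.2 * (p.2 - u.2)

lemma SepDir.mono {S T : Finset Pt} {u : Pt} (h : SepDir S u) (hT : T ⊆ S) : SepDir T u := by
  obtain ⟨d, hd⟩ := h
  exact ⟨d, fun p hp hpu => hd p (hT hp) hpu⟩

-- the key trilinear identity
lemma det3_identity (u a w p d : Pt) :
    det3 u a p * (d.1 * (w.1 - u.1) + d.2 * (w.2 - u.2)) =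
      det3 u a w * (d.1 * (p.1 - u.1) + d.2 * (p.2 - u.2)) +
      det3 u w p * (d.1 * (a.1 - u.1) + d.2 * (a.2 - u.2)) := by
  simp only [det3]; ring

lemma exists_support_neg (S : Finset Pt) (hgp : GenPos S) (u : Pt) (hu : u ∈ S)
    (d : Pt) (hd : ∀ p ∈ S, p ≠ u → 0 < d.1 * (p.1 - u.1) + d.2 * (p.2 - u.2))
    (hne : (S.erase u).Nonempty) :
    ∃ w ∈ S.erase u, ∀ p ∈ S.erase u, p ≠ w → det3 u w p < 0 := by
  suffices H : ∀ T : Finset Pt, T ⊆ S.erase u → T.Nonempty →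
      ∃ w ∈ T, ∀ p ∈ T, p ≠ w → det3 u w p < 0 by
    obtain ⟨w, hw1, hw2⟩ := H (S.erase u) (Finset.Subset.refl _) hne
    exact ⟨w, hw1, hw2⟩
  intro T
  induction T using Finset.induction_on with
  | empty => intro _ h; exact absurd h (by simp)
  | @insert a T hanotmem ih =>
    intro hsub _
    have haS : a ∈ S ∧ a ≠ u := by
      have := hsub (Finset.mem_insert_self a T)
      exact ⟨Finset.mem_of_mem_erase this, Finset.ne_of_mem_erase this⟩
    by_cases hT : T.Nonempty
    · obtain ⟨w, hwT, hw⟩ := ih (fun x hx => hsub (Finset.mem_insert_of_mem hx)) hT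
      have hwS : w ∈ S ∧ w ≠ u := by
        have := hsub (Finset.mem_insert_of_mem hwT)
        exact ⟨Finset.mem_of_mem_erase this, Finset.ne_of_mem_erase this⟩
      have haw : a ≠ w := fun h => hanotmem (h ▸ hwT)
      have hdet : det3 u w a ≠ 0 :=
        hgp.det3_ne_zero hu hwS.1 haS.1 (Ne.symm hwS.2) (Ne.symm haS.2) (fun h => haw h.symm)
      rcases lt_or_gt_of_ne hdet with hneg | hpos
      · refine ⟨w, Finset.mem_insert_of_mem hwT, ?_⟩
        intro p hp hpw
        rcases Finset.mem_insert.1 hp with rfl | hpT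
        · exact hneg
        · exact hw p hpT hpw
      · refine ⟨a, Finset.mem_insert_self a T, ?_⟩
        intro p hp hpa
        rcases Finset.mem_insert.1 hp with rfl | hpT
        · exact absurd rfl hpa
        by_cases hpw : p = w
        · rw [hpw, det3_swap23]
          linarith
        · have hpS : p ∈ S ∧ p ≠ u := by
            have := hsub (Finset.mem_insert_of_mem hpT)
            exact ⟨Finset.mem_of_mem_erase this, Finset.ne_of_mem_erase this⟩
          have hwp : det3 u w p < 0 := hw p hpT hpw
          have hα : 0 < d.1 * (a.1 - u.1) + d.2 * (a.2 - u.2) := hd a haS.1 haS.2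
          have hβ : 0 < d.1 * (w.1 - u.1) + d.2 * (w.2 - u.2) := hd w hwS.1 hwS.2
          have hγ : 0 < d.1 * (p.1 - u.1) + d.2 * (p.2 - u.2) := hd p hpS.1 hpS.2
          have haw' : det3 u a w < 0 := by rw [det3_swap23]; linarith
          have key := det3_identity u a w p d
          have h5 : det3 u a p * (d.1 * (w.1 - u.1) + d.2 * (w.2 - u.2)) < 0 := by
            linarith [mul_neg_of_neg_of_pos haw' hγ, mul_neg_of_neg_of_pos hwp hα]
          by_contra hcon
          push_neg at hcon
          have := mul_nonneg hcon hβ.le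
          linarith
    · rw [Finset.not_nonempty_iff_eq_empty] at hT
      subst hT
      refine ⟨a, Finset.mem_insert_self a ∅, ?_⟩
      intro p hp hpa
      rcases Finset.mem_insert.1 hp with rfl | hpT
      · exact absurd rfl hpa
      · exact absurd hpT (by simp)

lemma exists_support_pos (S : Finset Pt) (hgp : GenPos S) (u : Pt) (hu : u ∈ S)
    (d : Pt) (hd : ∀ p ∈ S, p ≠ u → 0 < d.1 * (p.1 - u.1) + d.2 * (p.2 - u.2))
    (hne : (S.erase u).Nonempty) :
    ∃ w ∈ S.erase u, ∀ p ∈ S.erase u, p ≠ w → 0 < det3 u w p := by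
  suffices H : ∀ T : Finset Pt, T ⊆ S.erase u → T.Nonempty →
      ∃ w ∈ T, ∀ p ∈ T, p ≠ w → 0 < det3 u w p by
    obtain ⟨w, hw1, hw2⟩ := H (S.erase u) (Finset.Subset.refl _) hne
    exact ⟨w, hw1, hw2⟩
  intro T
  induction T using Finset.induction_on with
  | empty => intro _ h; exact absurd h (by simp)
  | @insert a T hanotmem ih =>
    intro hsub _
    have haS : a ∈ S ∧ a ≠ u := by
      have := hsub (Finset.mem_insert_self a T)
      exact ⟨Finset.mem_of_mem_erase this, Finset.ne_of_mem_erase this⟩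
    by_cases hT : T.Nonempty
    · obtain ⟨w, hwT, hw⟩ := ih (fun x hx => hsub (Finset.mem_insert_of_mem hx)) hT
      have hwS : w ∈ S ∧ w ≠ u := by
        have := hsub (Finset.mem_insert_of_mem hwT)
        exact ⟨Finset.mem_of_mem_erase this, Finset.ne_of_mem_erase this⟩
      have haw : a ≠ w := fun h => hanotmem (h ▸ hwT)
      have hdet : det3 u w a ≠ 0 :=
        hgp.det3_ne_zero hu hwS.1 haS.1 (Ne.symm hwS.2) (Ne.symm haS.2) (fun h => haw h.symm)
      rcases lt_or_gt_of_ne hdet with hneg | hpos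
      · refine ⟨a, Finset.mem_insert_self a T, ?_⟩
        intro p hp hpa
        rcases Finset.mem_insert.1 hp with rfl | hpT
        · exact absurd rfl hpa
        by_cases hpw : p = w
        · rw [hpw, det3_swap23]
          linarith
        · have hpS : p ∈ S ∧ p ≠ u := by
            have := hsub (Finset.mem_insert_of_mem hpT)
            exact ⟨Finset.mem_of_mem_erase this, Finset.ne_of_mem_erase this⟩
          have hwp : 0 < det3 u w p := hw p hpT hpw
          have hα : 0 < d.1 * (a.1 - u.1) + d.2 * (a.2 - u.2) := hd a haS.1 haS.2
          have hβ : 0 < d.1 * (w.1 - u.1) + d.2 * (w.2 - u.2) := hd w hwS.1 hwS.2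
          have hγ : 0 < d.1 * (p.1 - u.1) + d.2 * (p.2 - u.2) := hd p hpS.1 hpS.2
          have haw' : 0 < det3 u a w := by rw [det3_swap23]; linarith
          have key := det3_identity u a w p d
          have h5 : 0 < det3 u a p * (d.1 * (w.1 - u.1) + d.2 * (w.2 - u.2)) := by
            linarith [mul_pos haw' hγ, mul_pos hwp hα]
          by_contra hcon
          push_neg at hcon
          have := mul_nonpos_of_nonpos_of_nonneg hcon hβ.le
          linarith
      · refine ⟨w, Finset.mem_insert_of_mem hwT, ?_⟩
        intro p hp hpw
        rcases Finset.mem_insert.1 hp with rfl | hpT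
        · exact hpos
        · exact hw p hpT hpw
    · rw [Finset.not_nonempty_iff_eq_empty] at hT
      subst hT
      refine ⟨a, Finset.mem_insert_self a ∅, ?_⟩
      intro p hp hpa
      rcases Finset.mem_insert.1 hp with rfl | hpT
      · exact absurd rfl hpa
      · exact absurd hpT (by simp)

-- attaching a vertex to a path via a supporting edge
lemma attach {S : Finset Pt} {u w : Pt} {l : List Pt}
    (hu : u ∈ S)
    (hl : PlanePath (S.erase u) l) (hw : l.head? = some w)
    (hside : (∀ p ∈ S, p ≠ u → p ≠ w → 0 < det3 u w p) ∨
             (∀ p ∈ S, p ≠ u → p ≠ w → det3 u w p < 0)) :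
    PlanePath S (u :: l) := by
  obtain ⟨hnd, htf, hcr⟩ := hl
  have hunl : u ∉ l := by
    intro h
    have : u ∈ S.erase u := htf ▸ List.mem_toFinset.2 h
    simp at this
  have hmem : ∀ g ∈ edgeList l, (g.1 ∈ S ∧ g.1 ≠ u) ∧ (g.2 ∈ S ∧ g.2 ≠ u) := by
    intro g hg
    obtain ⟨h1, h2⟩ := mem_of_mem_edgeList hg
    have h1' : g.1 ∈ S.erase u := htf ▸ List.mem_toFinset.2 h1
    have h2' : g.2 ∈ S.erase u := htf ▸ List.mem_toFinset.2 h2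
    exact ⟨⟨Finset.mem_of_mem_erase h1', Finset.ne_of_mem_erase h1'⟩,
      ⟨Finset.mem_of_mem_erase h2', Finset.ne_of_mem_erase h2'⟩⟩
  have key : ∀ g ∈ edgeList l,
      segment ℝ u w ∩ segment ℝ g.1 g.2 ⊆ ({u, w} : Set Pt) ∩ {g.1, g.2} := by
    intro g hg
    obtain ⟨⟨hg1S, hg1u⟩, ⟨hg2S, hg2u⟩⟩ := hmem g hg
    have hgne : g.1 ≠ g.2 := edge_ne_of_nodup hnd hg
    rcases hside with hpos | hneg
    · apply cross_line
      · by_cases h : g.1 = w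
        · exact Or.inr h
        · exact Or.inl (hpos g.1 hg1S hg1u h)
      · by_cases h : g.2 = w
        · exact Or.inr h
        · exact Or.inl (hpos g.2 hg2S hg2u h)
      · exact hgne
    · have hp : 0 < det3 w u g.1 ∨ g.1 = w := by
        by_cases h : g.1 = w
        · exact Or.inr h
        · left; rw [det3_swap]; linarith [hneg g.1 hg1S hg1u h]
      have hq : 0 < det3 w u g.2 ∨ g.2 = w := by
        by_cases h : g.2 = w
        · exact Or.inr h
        · left; rw [det3_swap]; linarith [hneg g.2 hg2S hg2u h]
      have h := cross_line' (u := w) (w := u) hp hq hgne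
      rw [segment_symm ℝ w u, Set.pair_comm w u] at h
      exact h
  cases l with
  | nil => simp at hw
  | cons w' t =>
    have hww : w' = w := by simpa using hw
    subst hww
    refine ⟨List.nodup_cons.2 ⟨hunl, hnd⟩, ?_, ?_⟩
    · rw [List.toFinset_cons, htf, Finset.insert_erase hu]
    · intro e he f hf hef
      rw [edgeList_cons_cons] at he hf
      rcases List.mem_cons.1 he with rfl | he'
      · rcases List.mem_cons.1 hf with rfl | hf'
        · exact absurd rfl hef
        · exact key f hf'
      · rcases List.mem_cons.1 hf with rfl | hf'
        · intro x hx
          have := key e he' ⟨hx.2, hx.1⟩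
          exact ⟨this.2, this.1⟩
        · exact hcr e he' f hf' hef

-- supporting edge gives separating direction at the new endpoint
lemma sepDir_of_support_neg {S : Finset Pt} {u w : Pt}
    (hw : ∀ p ∈ S, p ≠ w → det3 u w p < 0) : SepDir S w := by
  refine ⟨(w.2 - u.2, -(w.1 - u.1)), ?_⟩
  intro p hp hpw
  have h := hw p hp hpw
  have : (w.2 - u.2) * (p.1 - w.1) + (-(w.1 - u.1)) * (p.2 - w.2) = - det3 u w p := by
    simp only [det3]; ring
  show 0 < (w.2 - u.2) * (p.1 - w.1) + (-(w.1 - u.1)) * (p.2 - w.2)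
  linarith

lemma sepDir_of_support_pos {S : Finset Pt} {u w : Pt}
    (hw : ∀ p ∈ S, p ≠ w → 0 < det3 u w p) : SepDir S w := by
  refine ⟨(-(w.2 - u.2), w.1 - u.1), ?_⟩
  intro p hp hpw
  have h := hw p hp hpw
  have : (-(w.2 - u.2)) * (p.1 - w.1) + (w.1 - u.1) * (p.2 - w.2) = det3 u w p := by
    simp only [det3]; ring
  show 0 < (-(w.2 - u.2)) * (p.1 - w.1) + (w.1 - u.1) * (p.2 - w.2)
  linarith

-- a hull vertex admits a separating direction
lemma hullVertex_sepDir {S : Finset Pt} {z : Pt} (hz : z ∈ S) (hzv : HullVertex S z) :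
    SepDir S z := by
  classical
  set C := convexHull ℝ ((S.erase z : Finset Pt) : Set Pt) with hC
  have hzC : z ∉ C := by
    intro hmem
    have hSC : (S : Set Pt) ⊆ C := by
      intro p hp
      by_cases hpz : p = z
      · rw [hpz]; exact hmem
      · exact subset_convexHull ℝ _ (by
          simp only [Finset.coe_erase, Set.mem_diff, Set.mem_singleton_iff]
          exact ⟨hp, hpz⟩)
    have h1 : convexHull ℝ (S : Set Pt) ⊆ C := convexHull_min hSC (convex_convexHull ℝ _)
    have h2 : C ⊆ convexHull ℝ (S : Set Pt) :=
      convexHull_mono (by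
        intro x hx
        simp only [Finset.coe_erase, Set.mem_diff] at hx
        exact hx.1)
    have hCeq : convexHull ℝ (S : Set Pt) = C := le_antisymm h1 h2
    have hz' : z ∈ Set.extremePoints ℝ C := hCeq ▸ hzv
    have hz2 : z ∈ S.erase z := by
      have := extremePoints_convexHull_subset hz'
      exact_mod_cast this
    exact (Finset.notMem_erase z S) hz2
  have hclosed : IsClosed C := ((S.erase z).finite_toSet).isClosed_convexHull (𝕜 := ℝ)
  obtain ⟨f, s, hfs, hsz⟩ :=
    geometric_hahn_banach_closed_point (convex_convexHull ℝ _) hclosed hzC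
  refine ⟨(-(f (1, 0)), -(f (0, 1))), ?_⟩
  intro p hp hpz
  have hpC : p ∈ C := subset_convexHull ℝ _ (by
    simp only [Finset.coe_erase, Set.mem_diff, Set.mem_singleton_iff]
    exact ⟨hp, hpz⟩)
  have hfp : f p < f z := lt_trans (hfs p hpC) hsz
  have hrep : ∀ v : Pt, f v = f (1, 0) * v.1 + f (0, 1) * v.2 := by
    intro v
    have hv : v = v.1 • ((1 : ℝ), (0 : ℝ)) + v.2 • ((0 : ℝ), (1 : ℝ)) := by
      apply Prod.ext <;> simp
    calc f v = f (v.1 • ((1 : ℝ), (0 : ℝ)) + v.2 • ((0 : ℝ), (1 : ℝ))) := by rw [← hv]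
      _ = f (1, 0) * v.1 + f (0, 1) * v.2 := by
          rw [map_add, map_smul, map_smul]; simp [smul_eq_mul]; ring
  have h1 := hrep p
  have h2 := hrep z
  show 0 < (-(f (1, 0))) * (p.1 - z.1) + (-(f (0, 1))) * (p.2 - z.2)
  have : (-(f (1, 0))) * (p.1 - z.1) + (-(f (0, 1))) * (p.2 - z.2) = f z - f p := by
    rw [h1, h2]; ring
  linarith

-- one-endpoint lemma
lemma lemB : ∀ (n : ℕ) (S : Finset Pt), S.card = n → GenPos S → ∀ u ∈ S, SepDir S u →
    ∃ l : List Pt, PlanePath S l ∧ l.head? = some u := by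
  intro n
  induction n using Nat.strong_induction_on with
  | _ n ih =>
    intro S hcard hgp u hu hsep
    by_cases h1 : S.card = 1
    · obtain ⟨x, hx⟩ := Finset.card_eq_one.1 h1
      have hux : u = x := by rw [hx] at hu; simpa using hu
      subst hux
      refine ⟨[u], ⟨List.nodup_singleton u, ?_, ?_⟩, rfl⟩
      · rw [hx]; simp
      · intro e he; exact absurd he (by simp [edgeList])
    · have hcard2 : 2 ≤ S.card := by
        have : 1 ≤ S.card := Finset.card_pos.2 ⟨u, hu⟩
        omega
      have hne : (S.erase u).Nonempty := by
        rw [← Finset.card_pos, Finset.card_erase_of_mem hu]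
        omega
      obtain ⟨d, hd⟩ := hsep
      obtain ⟨w, hwmem, hwsup⟩ := exists_support_neg S hgp u hu d hd hne
      have hsideS : ∀ p ∈ S, p ≠ u → p ≠ w → det3 u w p < 0 := fun p hp hpu hpw =>
        hwsup p (Finset.mem_erase.2 ⟨hpu, hp⟩) hpw
      have hsepw : SepDir (S.erase u) w :=
        sepDir_of_support_neg (fun p hp hpw => hwsup p hp hpw)
      have hcarde : (S.erase u).card < n := by
        rw [Finset.card_erase_of_mem hu]; omega
      obtain ⟨l, hpp, hhead⟩ := ih (S.erase u).card hcarde (S.erase u) rfl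
        (genPos_mono hgp (Finset.erase_subset u S)) w hwmem hsepw
      exact ⟨u :: l, attach hu hpp hhead (Or.inr hsideS), rfl⟩

-- two-endpoint lemma
lemma lemA : ∀ (n : ℕ) (S : Finset Pt), S.card = n → GenPos S →
    ∀ u v : Pt, u ∈ S → v ∈ S → u ≠ v → SepDir S u → SepDir S v →
    ∃ l : List Pt, PlanePath S l ∧ l.head? = some u ∧ l.getLast? = some v := by
  intro n
  induction n using Nat.strong_induction_on with
  | _ n ih =>
    intro S hcard hgp u v hu hv huv hsepu hsepv
    by_cases h2 : S.card = 2
    · have hS : S = {u, v} := by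
        apply (Finset.eq_of_subset_of_card_le ?_ ?_).symm
        · intro x hx
          rcases Finset.mem_insert.1 hx with rfl | hx
          · exact hu
          · rw [Finset.mem_singleton.1 hx]; exact hv
        · rw [h2, Finset.card_insert_of_notMem (by simpa using huv),
            Finset.card_singleton]
      refine ⟨[u, v], ⟨?_, ?_, ?_⟩, rfl, rfl⟩
      · simp [huv]
      · rw [hS]; simp
      · intro e he f hf hef
        have he' : e = (u, v) := by simpa [edgeList] using he
        have hf' : f = (u, v) := by simpa [edgeList] using hf
        exact absurd (he'.trans hf'.symm) hef
    · have hcard3 : 3 ≤ S.card := by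
        have h1 : 1 ≤ S.card := Finset.card_pos.2 ⟨u, hu⟩
        have : u ∈ S ∧ v ∈ S ∧ u ≠ v := ⟨hu, hv, huv⟩
        have h2' : 2 ≤ S.card := Finset.one_lt_card.2 ⟨u, hu, v, hv, huv⟩
        omega
      have hne : (S.erase u).Nonempty := by
        rw [← Finset.card_pos, Finset.card_erase_of_mem hu]
        omega
      obtain ⟨d, hd⟩ := hsepu
      obtain ⟨w₁, hw₁mem, hw₁sup⟩ := exists_support_neg S hgp u hu d hd hne
      obtain ⟨w₂, hw₂mem, hw₂sup⟩ := exists_support_pos S hgp u hu d hd hne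
      have hw12 : w₁ ≠ w₂ := by
        intro h
        subst h
        have hcard_e : 2 ≤ (S.erase u).card := by
          rw [Finset.card_erase_of_mem hu]; omega
        obtain ⟨p, hp, hpw⟩ : ∃ p ∈ S.erase u, p ≠ w₁ := by
          by_contra hcon
          push_neg at hcon
          have : S.erase u ⊆ {w₁} := fun x hx => Finset.mem_singleton.2 (hcon x hx)
          have := Finset.card_le_card this
          simp at this
          omega
        linarith [hw₁sup p hp hpw, hw₂sup p hp hpw]
      -- choose w ≠ v among w₁ w₂, with the corresponding side condition
      obtain ⟨w, hwmem, hwv, hside⟩ :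
          ∃ w, w ∈ S.erase u ∧ w ≠ v ∧
            ((∀ p ∈ S, p ≠ u → p ≠ w → 0 < det3 u w p) ∨
             (∀ p ∈ S, p ≠ u → p ≠ w → det3 u w p < 0)) := by
        by_cases h : w₁ = v
        · refine ⟨w₂, hw₂mem, by rw [← h]; exact hw12.symm, Or.inl ?_⟩
          intro p hp hpu hpw
          exact hw₂sup p (Finset.mem_erase.2 ⟨hpu, hp⟩) hpw
        · refine ⟨w₁, hw₁mem, h, Or.inr ?_⟩
          intro p hp hpu hpw
          exact hw₁sup p (Finset.mem_erase.2 ⟨hpu, hp⟩) hpw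
      have hsepw : SepDir (S.erase u) w := by
        rcases hside with hs | hs
        · exact sepDir_of_support_pos (fun p hp hpw =>
            hs p (Finset.mem_of_mem_erase hp) (Finset.ne_of_mem_erase hp) hpw)
        · exact sepDir_of_support_neg (fun p hp hpw =>
            hs p (Finset.mem_of_mem_erase hp) (Finset.ne_of_mem_erase hp) hpw)
      have hvmem : v ∈ S.erase u := Finset.mem_erase.2 ⟨huv.symm, hv⟩
      have hcarde : (S.erase u).card < n := by
        rw [Finset.card_erase_of_mem hu]; omega
      obtain ⟨l, hpp, hhead, hlast⟩ := ih (S.erase u).card hcarde (S.erase u) rfl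
        (genPos_mono hgp (Finset.erase_subset u S)) w v hwmem hvmem hwv
        hsepw (hsepv.mono (Finset.erase_subset u S))
      refine ⟨u :: l, attach hu hpp hhead hside, rfl, ?_⟩
      cases l with
      | nil => simp at hhead
      | cons w' t => rw [List.getLast?_cons_cons]; exact hlast

-- main construction, assuming z is on the positive side of line ab
lemma main_aux (S : Finset Pt) (hgp : GenPos S)
    (a b z : Pt) (ha : a ∈ S) (hb : b ∈ S) (hz : z ∈ S)
    (hab : a ≠ b) (haz : a ≠ z) (hbz : b ≠ z)
    (hsep : SepDir S z) (hzpos : 0 < det3 a b z) :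
    ∃ l : List Pt, PlanePath S l ∧ IsEdgeOf a b l ∧ l.head? = some z := by
  classical
  set L : Finset Pt := S.filter (fun p => 0 < det3 a b p) with hL
  set R : Finset Pt := S.filter (fun p => det3 a b p < 0) with hR
  set SL : Finset Pt := insert a L with hSL
  set SR : Finset Pt := insert b R with hSR
  have hSLsub : SL ⊆ S := Finset.insert_subset ha (Finset.filter_subset _ _)
  have hSRsub : SR ⊆ S := Finset.insert_subset hb (Finset.filter_subset _ _)
  have hSLfact : ∀ p ∈ SL, 0 < det3 a b p ∨ p = a := by
    intro p hp
    rcases Finset.mem_insert.1 hp with rfl | hp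
    · exact Or.inr rfl
    · exact Or.inl (Finset.mem_filter.1 hp).2
  have hSRfact : ∀ p ∈ SR, det3 a b p < 0 ∨ p = b := by
    intro p hp
    rcases Finset.mem_insert.1 hp with rfl | hp
    · exact Or.inr rfl
    · exact Or.inl (Finset.mem_filter.1 hp).2
  have hzL : z ∈ SL := Finset.mem_insert_of_mem (Finset.mem_filter.2 ⟨hz, hzpos⟩)
  have haL : a ∈ SL := Finset.mem_insert_self a L
  have hbR : b ∈ SR := Finset.mem_insert_self b R
  -- separating directions
  have hsepSLz : SepDir SL z := hsep.mono hSLsub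
  have hsepSLa : SepDir SL a := by
    refine ⟨(-(b.2 - a.2), b.1 - a.1), ?_⟩
    intro p hp hpa
    have hppos : 0 < det3 a b p := by
      rcases hSLfact p hp with h | h
      · exact h
      · exact absurd h hpa
    have : (-(b.2 - a.2)) * (p.1 - a.1) + (b.1 - a.1) * (p.2 - a.2) = det3 a b p := by
      simp only [det3]; ring
    show 0 < (-(b.2 - a.2)) * (p.1 - a.1) + (b.1 - a.1) * (p.2 - a.2)
    linarith
  have hsepSRb : SepDir SR b := by
    refine ⟨(b.2 - a.2, -(b.1 - a.1)), ?_⟩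
    intro p hp hpb
    have hpneg : det3 a b p < 0 := by
      rcases hSRfact p hp with h | h
      · exact h
      · exact absurd h hpb
    have : (b.2 - a.2) * (p.1 - b.1) + (-(b.1 - a.1)) * (p.2 - b.2) = - det3 a b p := by
      simp only [det3]; ring
    show 0 < (b.2 - a.2) * (p.1 - b.1) + (-(b.1 - a.1)) * (p.2 - b.2)
    linarith
  -- the two sub-paths
  obtain ⟨l₁, hpp₁, hhead₁, hlast₁⟩ := lemA SL.card SL rfl (genPos_mono hgp hSLsub)
    z a hzL haL (Ne.symm haz) hsepSLz hsepSLa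
  obtain ⟨l₂, hpp₂, hhead₂⟩ := lemB SR.card SR rfl (genPos_mono hgp hSRsub)
    b hbR hsepSRb
  obtain ⟨hnd₁, htf₁, hcr₁⟩ := hpp₁
  obtain ⟨hnd₂, htf₂, hcr₂⟩ := hpp₂
  -- decomposition of the edges of the concatenation
  have hedges : edgeList (l₁ ++ l₂) = edgeList l₁ ++ (a, b) :: edgeList l₂ :=
    edgeList_append hlast₁ hhead₂
  -- union and disjointness
  have hunion : SL ∪ SR = S := by
    ext p
    constructor
    · intro hp
      rcases Finset.mem_union.1 hp with h | h
      · exact hSLsub h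
      · exact hSRsub h
    · intro hp
      by_cases hpa : p = a
      · exact Finset.mem_union_left _ (hpa ▸ haL)
      by_cases hpb : p = b
      · exact Finset.mem_union_right _ (hpb ▸ hbR)
      have hdet : det3 a b p ≠ 0 :=
        hgp.det3_ne_zero ha hb hp hab (fun h => hpa h.symm) (fun h => hpb h.symm)
      rcases lt_or_gt_of_ne hdet with h | h
      · exact Finset.mem_union_right _ (Finset.mem_insert_of_mem
          (Finset.mem_filter.2 ⟨hp, h⟩))
      · exact Finset.mem_union_left _ (Finset.mem_insert_of_mem
          (Finset.mem_filter.2 ⟨hp, h⟩))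
  have hdisj : ∀ p, p ∈ SL → p ∈ SR → False := by
    intro p hp1 hp2
    rcases hSLfact p hp1 with h1 | h1 <;> rcases hSRfact p hp2 with h2 | h2
    · linarith
    · rw [h2] at h1; rw [det3_ab_b] at h1; linarith
    · rw [h1] at h2; rw [det3_ab_a] at h2; linarith
    · exact hab (h1 ▸ h2 ▸ rfl)
  -- edge endpoint facts
  have hedge₁ : ∀ e ∈ edgeList l₁, (0 < det3 a b e.1 ∨ e.1 = a) ∧
      (0 < det3 a b e.2 ∨ e.2 = a) ∧ e.1 ≠ e.2 := by
    intro e he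
    obtain ⟨h1, h2⟩ := mem_of_mem_edgeList he
    exact ⟨hSLfact e.1 (htf₁ ▸ List.mem_toFinset.2 h1),
      hSLfact e.2 (htf₁ ▸ List.mem_toFinset.2 h2), edge_ne_of_nodup hnd₁ he⟩
  have hedge₂ : ∀ e ∈ edgeList l₂, (det3 a b e.1 < 0 ∨ e.1 = b) ∧
      (det3 a b e.2 < 0 ∨ e.2 = b) ∧ e.1 ≠ e.2 := by
    intro e he
    obtain ⟨h1, h2⟩ := mem_of_mem_edgeList he
    exact ⟨hSRfact e.1 (htf₂ ▸ List.mem_toFinset.2 h1),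
      hSRfact e.2 (htf₂ ▸ List.mem_toFinset.2 h2), edge_ne_of_nodup hnd₂ he⟩
  refine ⟨l₁ ++ l₂, ⟨?_, ?_, ?_⟩, ?_, ?_⟩
  · -- Nodup
    rw [List.nodup_append]
    refine ⟨hnd₁, hnd₂, ?_⟩
    intro x hx1 y hx2 rfl
    exact hdisj x (htf₁ ▸ List.mem_toFinset.2 hx1) (htf₂ ▸ List.mem_toFinset.2 hx2)
  · -- toFinset
    rw [List.toFinset_append, htf₁, htf₂, hunion]
  · -- crossing-freeness
    intro e he f hf hef
    rw [hedges] at he hf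
    have hsplit : ∀ g, g ∈ edgeList l₁ ++ (a, b) :: edgeList l₂ →
        g ∈ edgeList l₁ ∨ g = (a, b) ∨ g ∈ edgeList l₂ := by
      intro g hg
      rcases List.mem_append.1 hg with h | h
      · exact Or.inl h
      · rcases List.mem_cons.1 h with h | h
        · exact Or.inr (Or.inl h)
        · exact Or.inr (Or.inr h)
    rcases hsplit e he with he' | he' | he' <;> rcases hsplit f hf with hf' | hf' | hf'
    · exact hcr₁ e he' f hf' hef
    · -- e in l₁, f = (a,b)
      obtain ⟨h1, h2, h3⟩ := hedge₁ e he'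
      rw [hf']
      exact cross_Lab h1 h2 h3
    · -- e in l₁, f in l₂
      obtain ⟨h1, h2, h3⟩ := hedge₁ e he'
      obtain ⟨h4, h5, h6⟩ := hedge₂ f hf'
      exact cross_LR hab h1 h2 h3 h4 h5 h6
    · -- e = (a,b), f in l₁
      obtain ⟨h1, h2, h3⟩ := hedge₁ f hf'
      rw [he']
      intro x hx
      have := cross_Lab h1 h2 h3 ⟨hx.2, hx.1⟩
      exact ⟨this.2, this.1⟩
    · exact absurd (he'.trans hf'.symm) hef
    · -- e = (a,b), f in l₂
      obtain ⟨h1, h2, h3⟩ := hedge₂ f hf'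
      rw [he']
      intro x hx
      have := cross_Rab h1 h2 h3 ⟨hx.2, hx.1⟩
      exact ⟨this.2, this.1⟩
    · -- e in l₂, f in l₁
      obtain ⟨h1, h2, h3⟩ := hedge₂ e he'
      obtain ⟨h4, h5, h6⟩ := hedge₁ f hf'
      intro x hx
      have := cross_LR hab h4 h5 h6 h1 h2 h3 ⟨hx.2, hx.1⟩
      exact ⟨this.2, this.1⟩
    · -- e in l₂, f = (a,b)
      obtain ⟨h1, h2, h3⟩ := hedge₂ e he'
      rw [hf']
      exact cross_Rab h1 h2 h3
    · exact hcr₂ e he' f hf' hef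
  · -- contains edge ab
    left
    rw [hedges]
    exact List.mem_append.2 (Or.inr List.mem_cons_self)
  · -- head
    cases l₁ with
    | nil => simp at hhead₁
    | cons z' t =>
      have : z' = z := by simpa using hhead₁
      subst this
      rfl

/-- On a set of at least 3 points in general position, for distinct
`a, b, z ∈ S` with `z` a hull vertex, there is a plane Hamiltonian path containing
the segment `ab` as an edge and starting at `z`. -/
theorem stmt_2 (S : Finset Pt) (hcard : 3 ≤ S.card) (hgp : GenPos S)
    (a b z : Pt) (ha : a ∈ S) (hb : b ∈ S) (hz : z ∈ S)
    (hab : a ≠ b) (haz : a ≠ z) (hbz : b ≠ z)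
    (hzv : HullVertex S z) :
    ∃ l : List Pt, PlanePath S l ∧ IsEdgeOf a b l ∧ l.head? = some z := by
  have hsep : SepDir S z := hullVertex_sepDir hz hzv
  have hdet : det3 a b z ≠ 0 := hgp.det3_ne_zero ha hb hz hab haz hbz
  rcases lt_or_gt_of_ne hdet with hneg | hpos
  · have hpos' : 0 < det3 b a z := by rw [det3_swap]; linarith
    obtain ⟨l, hpp, hedge, hhead⟩ :=
      main_aux S hgp b a z hb ha hz hab.symm hbz haz hsep hpos'
    exact ⟨l, hpp, hedge.elim Or.inr Or.inl, hhead⟩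
  · exact main_aux S hgp a b z ha hb hz hab haz hbz hsep hpos
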